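/- Let I = B(z, r) with z ∈ K and 0 < r < 1, and let L ≥ L₀(I) be a positive integer with 3^{-L₀(I)}/2 < r/5. Then μ(I) ≍ |C_L ∩ I| / 2^L, with absolute implied constants. Moreover, for any ball B = B(z, r) with z ∈ ℝ, 0 < r < 1, and any positive integer L with 3^{1−L} < r, one has μ(B) ≤ 2^{-(L-1)} |C_L ∩ 5B|, where 5B is the ball with the same centre and radius 5r. -/

import Mathlib

open MeasureTheory Metric

/-- γ = log 2 / log 3. -/
noncomputable def cantorDim : ℝ := Real.log 2 / Real.log 3

/-- The natural measure on the middle-third Cantor set. -/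
noncomputable def cantorMeasure : Measure ℝ :=
  (μH[cantorDim] : Measure ℝ).restrict cantorSet

/-- `C_L`: endpoints of the level-`L` Cantor intervals. -/
def cantorEndpoints (L : ℕ) : Set ℝ :=
  {x | (∃ b : ℕ, b ≤ 3 ^ L ∧ x = (b : ℝ) / 3 ^ L) ∧ x ∈ cantorSet}

open Set ENNReal

noncomputable section

def cbit (b : Bool) : ℝ := if b then 2 else 0

lemma cbit_nonneg (b : Bool) : 0 ≤ cbit b := by cases b <;> simp [cbit]
lemma cbit_le_two (b : Bool) : cbit b ≤ 2 := by cases b <;> simp [cbit]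

def eApprox (L : ℕ) (a : ℕ → Bool) : ℝ := ∑ i ∈ Finset.range L, cbit (a i) / 3 ^ (i + 1)

lemma term_nonneg (a : ℕ → Bool) (i : ℕ) : 0 ≤ cbit (a i) / 3 ^ (i + 1) :=
  div_nonneg (cbit_nonneg _) (by positivity)

lemma summable_cbit (a : ℕ → Bool) : Summable (fun i => cbit (a i) / 3 ^ (i + 1)) := by
  refine Summable.of_nonneg_of_le (term_nonneg a) (fun i => ?_)
    ((summable_geometric_of_lt_one (r := (1/3:ℝ)) (by norm_num) (by norm_num)).mul_left 2)
  · rw [div_le_iff₀ (by positivity)]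
    have h1 : cbit (a i) ≤ 2 := cbit_le_two _
    have h2 : 2 * (1/3:ℝ)^i * 3^(i+1) = 6 := by
      rw [div_pow, one_pow, pow_succ]
      field_simp
      ring
    linarith

def cfun (a : ℕ → Bool) : ℝ := ∑' i, cbit (a i) / 3 ^ (i + 1)

lemma eApprox_nonneg (L : ℕ) (a : ℕ → Bool) : 0 ≤ eApprox L a :=
  Finset.sum_nonneg fun i _ => term_nonneg a i

lemma eApprox_le (L : ℕ) (a : ℕ → Bool) : eApprox L a ≤ 1 - (1/3 : ℝ) ^ L := by
  induction L with
  | zero => simp [eApprox]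
  | succ L ih =>
    rw [eApprox, Finset.sum_range_succ]
    have h1 : cbit (a L) / 3 ^ (L + 1) ≤ 2 / 3 ^ (L+1) := by
      gcongr; exact cbit_le_two _
    have := ih
    rw [eApprox] at this
    have h3 : (1:ℝ) - (1/3)^L + 2/3^(L+1) = 1 - (1/3)^(L+1) := by
      have hx : ((1:ℝ)/3)^L * 3^L = 1 := by rw [← mul_pow]; norm_num
      field_simp
      linear_combination (-2:ℝ) * hx
    nlinarith [this, h1]

lemma cfun_eq_eApprox_add (L : ℕ) (a : ℕ → Bool) :
    cfun a = eApprox L a + ∑' i, cbit (a (i + L)) / 3 ^ (i + L + 1) := by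
  rw [cfun, eApprox, ← Summable.sum_add_tsum_nat_add L (summable_cbit a)]

lemma tail_nonneg (L : ℕ) (a : ℕ → Bool) :
    0 ≤ ∑' i, cbit (a (i + L)) / 3 ^ (i + L + 1) :=
  tsum_nonneg fun i => term_nonneg a _

lemma tail_le (L : ℕ) (a : ℕ → Bool) :
    ∑' i, cbit (a (i + L)) / 3 ^ (i + L + 1) ≤ (1/3 : ℝ) ^ L := by
  have hs : Summable (fun i => cbit (a (i + L)) / 3 ^ (i + L + 1)) :=
    ((summable_cbit a).comp_injective (add_left_injective L))
  have hgeom : Summable (fun i : ℕ => (2 * (1/3:ℝ)^(L+1)) * (1/3)^i) :=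
    (summable_geometric_of_lt_one (by norm_num) (by norm_num)).mul_left _
  have hkey : ∀ i : ℕ, (2:ℝ) / 3 ^ (i + L + 1) = (2 * (1/3)^(L+1)) * (1/3)^i := by
    intro i
    rw [div_pow, div_pow, one_pow, one_pow]
    ring
  have h1 : ∑' i, cbit (a (i + L)) / 3 ^ (i + L + 1) ≤
      ∑' i : ℕ, (2 * (1/3:ℝ)^(L+1)) * (1/3)^i := by
    apply Summable.tsum_le_tsum _ hs hgeom
    intro i
    rw [← hkey i]
    gcongr
    exact cbit_le_two _
  have h2 : ∑' i : ℕ, (2 * (1/3:ℝ)^(L+1)) * (1/3)^i = (1/3 : ℝ) ^ L := by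
    rw [tsum_mul_left, tsum_geometric_of_lt_one (by norm_num) (by norm_num)]
    rw [pow_succ]
    field_simp
    ring
  linarith

lemma eApprox_le_cfun (L : ℕ) (a : ℕ → Bool) : eApprox L a ≤ cfun a := by
  have := tail_nonneg L a; rw [cfun_eq_eApprox_add L a]; linarith

lemma cfun_le_eApprox (L : ℕ) (a : ℕ → Bool) : cfun a ≤ eApprox L a + (1/3:ℝ)^L := by
  have := tail_le L a; rw [cfun_eq_eApprox_add L a]; linarith

lemma eApprox_succ (L : ℕ) (a : ℕ → Bool) :
    eApprox (L + 1) a = (cbit (a 0) + eApprox L (fun i => a (i + 1))) / 3 := by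
  rw [eApprox, Finset.sum_range_succ', eApprox, add_div, Finset.sum_div, add_comm]
  congr 1
  · norm_num
  · exact Finset.sum_congr rfl fun i _ => by rw [div_div, ← pow_succ]

lemma eApprox_congr {L : ℕ} {a a' : ℕ → Bool} (h : ∀ i < L, a i = a' i) :
    eApprox L a = eApprox L a' :=
  Finset.sum_congr rfl fun i hi => by rw [h i (Finset.mem_range.mp hi)]

lemma eApprox_sep_head (L : ℕ) (a a' : ℕ → Bool) (hne : a 0 ≠ a' 0) :
    2 * (1/3:ℝ)^(L+1) ≤ |eApprox (L+1) a - eApprox (L+1) a'| := by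
  rw [eApprox_succ, eApprox_succ]
  have h2 : |cbit (a 0) - cbit (a' 0)| = 2 := by
    cases h : a 0 <;> cases h' : a' 0 <;> simp_all [cbit]
  have hb1 := eApprox_nonneg L (fun i => a (i+1))
  have hb2 := eApprox_nonneg L (fun i => a' (i+1))
  have hb3 := eApprox_le L (fun i => a (i+1))
  have hb4 := eApprox_le L (fun i => a' (i+1))
  have hpl : (1/3:ℝ)^L ≤ 1 := by apply pow_le_one₀ <;> norm_num
  rw [div_sub_div_same, abs_div, abs_of_pos (by norm_num : (0:ℝ) < 3), le_div_iff₀ (by norm_num)]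
  have hkey : |cbit (a 0) - cbit (a' 0)| -
      |eApprox L (fun i => a (i+1)) - eApprox L (fun i => a' (i+1))| ≤
      |cbit (a 0) + eApprox L (fun i => a (i+1)) - (cbit (a' 0) + eApprox L (fun i => a' (i+1)))| := by
    have h := abs_sub_abs_le_abs_sub (cbit (a 0) - cbit (a' 0))
      (eApprox L (fun i => a' (i+1)) - eApprox L (fun i => a (i+1)))
    have heq : cbit (a 0) - cbit (a' 0) - (eApprox L (fun i => a' (i+1)) - eApprox L (fun i => a (i+1)))
        = cbit (a 0) + eApprox L (fun i => a (i+1)) - (cbit (a' 0) + eApprox L (fun i => a' (i+1))) := by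
      ring
    rw [heq] at h
    rw [abs_sub_comm (eApprox L fun i => a' (i+1))] at h
    linarith
  have habs : |eApprox L (fun i => a (i+1)) - eApprox L (fun i => a' (i+1))| ≤ 1 - (1/3)^L := by
    rw [abs_sub_le_iff]; constructor <;> linarith
  have hstep : 2 * (1/3:ℝ)^(L+1) * 3 = 2 * (1/3)^L := by rw [pow_succ]; ring
  rw [hstep, h2] at *
  linarith

/-- separation of level-L endpoints -/
lemma eApprox_sep : ∀ (L : ℕ) (a a' : ℕ → Bool), (∃ i < L, a i ≠ a' i) →
    2 * (1/3:ℝ)^L ≤ |eApprox L a - eApprox L a'| := by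
  intro L
  induction L with
  | zero => rintro a a' ⟨i, hi, -⟩; exact absurd hi (Nat.not_lt_zero i)
  | succ L ih =>
    rintro a a' ⟨i, hi, hne⟩
    rcases eq_or_ne (a 0) (a' 0) with hh | hh
    · have hi0 : i ≠ 0 := by rintro rfl; exact hne hh
      obtain ⟨j, rfl⟩ := Nat.exists_eq_succ_of_ne_zero hi0
      have hrec := ih (fun i => a (i+1)) (fun i => a' (i+1)) ⟨j, by omega, hne⟩
      rw [eApprox_succ, eApprox_succ, hh]
      have heq : (cbit (a' 0) + eApprox L (fun i => a (i+1))) / 3 -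
          (cbit (a' 0) + eApprox L (fun i => a' (i+1))) / 3 =
          (eApprox L (fun i => a (i+1)) - eApprox L (fun i => a' (i+1))) / 3 := by ring
      rw [heq, abs_div, abs_of_pos (by norm_num : (0:ℝ) < 3), le_div_iff₀ (by norm_num)]
      have hstep : 2 * (1/3:ℝ)^(L+1) * 3 = 2 * (1/3)^L := by rw [pow_succ]; ring
      rw [hstep]
      linarith
    · exact eApprox_sep_head L a a' hh


def Jset (L : ℕ) (a : ℕ → Bool) : Set ℝ := Icc (eApprox L a) (eApprox L a + (1/3:ℝ) ^ L)

lemma cfun_mem_Jset (L : ℕ) (a : ℕ → Bool) : cfun a ∈ Jset L a :=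
  ⟨eApprox_le_cfun L a, cfun_le_eApprox L a⟩

lemma eApprox_zero (a : ℕ → Bool) : eApprox 0 a = 0 := by simp [eApprox]

lemma Jset_subset_pre : ∀ (L : ℕ) (a : ℕ → Bool), Jset L a ⊆ preCantorSet L := by
  intro L
  induction L with
  | zero =>
    intro a x hx
    rw [Jset, eApprox_zero] at hx
    simpa using hx
  | succ L ih =>
    intro a x hx
    rw [Jset, eApprox_succ] at hx
    obtain ⟨hx1, hx2⟩ := hx
    have hp : ((1:ℝ)/3)^(L+1) * 3 = (1/3)^L := by rw [pow_succ]; ring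
    cases hb : a 0
    · rw [hb] at hx1 hx2
      simp only [cbit] at hx1 hx2
      norm_num at hx1 hx2
      left
      refine ⟨3 * x, ih (fun i => a (i + 1)) ⟨by linarith, by nlinarith⟩, by ring⟩
    · rw [hb] at hx1 hx2
      simp only [cbit] at hx1 hx2
      norm_num at hx1 hx2
      right
      refine ⟨3 * x - 2, ih (fun i => a (i + 1)) ⟨by linarith, by nlinarith⟩, by ring⟩

lemma cfun_mem_cantorSet (a : ℕ → Bool) : cfun a ∈ cantorSet :=
  Set.mem_iInter.mpr fun n => Jset_subset_pre n a (cfun_mem_Jset n a)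

lemma tsum_two_div (L : ℕ) : ∑' i : ℕ, (2:ℝ) / 3 ^ (i + L + 1) = (1/3 : ℝ) ^ L := by
  have hkey : ∀ i : ℕ, (2:ℝ) / 3 ^ (i + L + 1) = (2 * (1/3)^(L+1)) * (1/3)^i := by
    intro i
    rw [div_pow, div_pow, one_pow, one_pow]
    ring
  calc ∑' i : ℕ, (2:ℝ) / 3 ^ (i + L + 1) = ∑' i : ℕ, (2 * (1/3:ℝ)^(L+1)) * (1/3)^i := by
        exact tsum_congr hkey
    _ = (1/3:ℝ)^L := by
        rw [tsum_mul_left, tsum_geometric_of_lt_one (by norm_num) (by norm_num)]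
        rw [pow_succ]
        field_simp
        ring

lemma eApprox_mem_cantorSet (L : ℕ) (a : ℕ → Bool) : eApprox L a ∈ cantorSet := by
  set b : ℕ → Bool := fun i => if i < L then a i else false with hb
  have h1 : cfun b = eApprox L b := by
    rw [cfun_eq_eApprox_add L b]
    have : ∀ i : ℕ, cbit (b (i + L)) / 3 ^ (i + L + 1) = 0 := by
      intro i
      have : b (i + L) = false := by simp [hb]
      rw [this]
      simp [cbit]
    rw [tsum_congr this, tsum_zero, add_zero]
  have h2 : eApprox L b = eApprox L a :=
    eApprox_congr fun i hi => by simp [hb, hi]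
  rw [← h2, ← h1]
  exact cfun_mem_cantorSet b

lemma eApprox_add_mem_cantorSet (L : ℕ) (a : ℕ → Bool) :
    eApprox L a + (1/3:ℝ)^L ∈ cantorSet := by
  set b : ℕ → Bool := fun i => if i < L then a i else true with hb
  have h1 : cfun b = eApprox L b + (1/3:ℝ)^L := by
    rw [cfun_eq_eApprox_add L b]
    congr 1
    have : ∀ i : ℕ, cbit (b (i + L)) / 3 ^ (i + L + 1) = 2 / 3 ^ (i + L + 1) := by
      intro i
      have : b (i + L) = true := by simp [hb]
      rw [this]
      simp [cbit]
    rw [tsum_congr this, tsum_two_div]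
  have h2 : eApprox L b = eApprox L a :=
    eApprox_congr fun i hi => by simp [hb, hi]
  rw [← h2, ← h1]
  exact cfun_mem_cantorSet b

lemma eApprox_rat (L : ℕ) (a : ℕ → Bool) :
    ∃ b : ℕ, b + 1 ≤ 3 ^ L ∧ eApprox L a = (b : ℝ) / 3 ^ L := by
  induction L generalizing a with
  | zero => exact ⟨0, by norm_num, by simp [eApprox_zero]⟩
  | succ L ih =>
    obtain ⟨b, hb, heq⟩ := ih (fun i => a (i + 1))
    refine ⟨(if a 0 then 2 else 0) * 3 ^ L + b, ?_, ?_⟩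
    · have : (if a 0 then 2 else 0) ≤ 2 := by split <;> omega
      calc (if a 0 then 2 else 0) * 3 ^ L + b + 1 ≤ 2 * 3 ^ L + 3 ^ L := by
            have := hb; nlinarith [pow_pos (by norm_num : (0:ℕ) < 3) L]
        _ = 3 ^ (L + 1) := by rw [pow_succ]; ring
    · rw [eApprox_succ, heq]
      have hc : cbit (a 0) = ((if a 0 then 2 else 0 : ℕ) : ℝ) := by
        cases h : a 0 <;> simp [cbit]
      rw [hc]
      push_cast
      rw [pow_succ]
      field_simp
      try ring

def extW (L : ℕ) (v : Fin L → Bool) : ℕ → Bool := fun i => if h : i < L then v ⟨i, h⟩ else false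

lemma extW_lt {L : ℕ} (v : Fin L → Bool) {i : ℕ} (h : i < L) : extW L v i = v ⟨i, h⟩ :=
  dif_pos h

def consF {L : ℕ} (b : Bool) (v : Fin L → Bool) : Fin (L+1) → Bool :=
  fun j => if hj : (j : ℕ) = 0 then b else v ⟨(j : ℕ) - 1, by omega⟩

lemma eApprox_consF {L : ℕ} (b : Bool) (v : Fin L → Bool) :
    eApprox (L+1) (extW (L+1) (consF b v)) = (cbit b + eApprox L (extW L v)) / 3 := by
  rw [eApprox_succ]
  have h0 : extW (L+1) (consF b v) 0 = b := by
    rw [extW_lt _ (Nat.succ_pos L)]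
    simp [consF]
  have hsh : eApprox L (fun i => extW (L+1) (consF b v) (i+1)) = eApprox L (extW L v) := by
    apply eApprox_congr
    intro i hi
    rw [extW_lt _ (by omega : i + 1 < L + 1), extW_lt _ hi]
    simp [consF]
  rw [h0, hsh]

lemma preCantorSet_subset_iUnion :
    ∀ L : ℕ, preCantorSet L ⊆ ⋃ v : Fin L → Bool, Jset L (extW L v) := by
  intro L
  induction L with
  | zero =>
    intro x hx
    refine Set.mem_iUnion.mpr ⟨fun i => i.elim0, ?_⟩
    rw [Jset, eApprox_zero]
    simpa using hx
  | succ L ih =>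
    intro x hx
    have hp : ((1:ℝ)/3)^(L+1) * 3 = (1/3)^L := by rw [pow_succ]; ring
    rcases hx with ⟨y, hy, rfl⟩ | ⟨y, hy, rfl⟩
    · obtain ⟨v, hv⟩ := Set.mem_iUnion.mp (ih hy)
      obtain ⟨hv1, hv2⟩ := hv
      refine Set.mem_iUnion.mpr ⟨consF false v, ?_⟩
      rw [Jset, eApprox_consF]
      simp only [cbit]
      norm_num
      constructor
      · linarith
      · nlinarith
    · obtain ⟨v, hv⟩ := Set.mem_iUnion.mp (ih hy)
      obtain ⟨hv1, hv2⟩ := hv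
      refine Set.mem_iUnion.mpr ⟨consF true v, ?_⟩
      rw [Jset, eApprox_consF]
      simp only [cbit]
      norm_num
      constructor
      · linarith
      · nlinarith

lemma cantorSet_subset_iUnion (L : ℕ) :
    cantorSet ⊆ ⋃ v : Fin L → Bool, Jset L (extW L v) :=
  fun x hx => preCantorSet_subset_iUnion L (Set.mem_iInter.mp hx L)

lemma geom_partial (L : ℕ) : ∀ k : ℕ,
    ∑ i ∈ Finset.range k, (2:ℝ) / 3 ^ (i + L + 1) = (1/3:ℝ)^L - (1/3:ℝ)^(L+k) := by
  intro k
  induction k with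
  | zero => simp
  | succ k ih =>
    rw [Finset.sum_range_succ, ih]
    have h1 : ((1:ℝ)/3)^(L+(k+1)) = (1/3)^(L+k) / 3 := by
      rw [← Nat.add_assoc, pow_succ]; ring
    have h2 : (2:ℝ) / 3^(k+L+1) = (1/3)^(L+k) * (2/3) := by
      have h3 : (3:ℝ)^(k+L+1) = 3^(L+k) * 3 := by
        rw [← pow_succ]
        congr 1
        omega
      rw [div_pow, one_pow, h3]
      field_simp
      try ring
    rw [h1, h2]
    ring

lemma eApprox_mono_le {L M : ℕ} (h : L ≤ M) (a : ℕ → Bool) :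
    eApprox L a ≤ eApprox M a := by
  apply Finset.sum_le_sum_of_subset_of_nonneg (Finset.range_subset_range.mpr h)
  exact fun i _ _ => term_nonneg a i

lemma eApprox_mono_ub {L M : ℕ} (h : L ≤ M) (a : ℕ → Bool) :
    eApprox M a + (1/3:ℝ)^M ≤ eApprox L a + (1/3:ℝ)^L := by
  have hsplit : eApprox M a = eApprox L a + ∑ i ∈ Finset.Ico L M, cbit (a i) / 3 ^ (i+1) := by
    rw [eApprox, eApprox, ← Finset.sum_range_add_sum_Ico _ h]
  have hbound : ∑ i ∈ Finset.Ico L M, cbit (a i) / 3 ^ (i+1) ≤ (1/3:ℝ)^L - (1/3:ℝ)^M := by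
    have h1 : ∑ i ∈ Finset.Ico L M, cbit (a i) / 3 ^ (i+1) ≤
        ∑ i ∈ Finset.Ico L M, (2:ℝ) / 3 ^ (i+1) := by
      apply Finset.sum_le_sum
      intro i _
      gcongr
      exact cbit_le_two _
    have h2 : ∑ i ∈ Finset.Ico L M, (2:ℝ) / 3 ^ (i+1) = (1/3:ℝ)^L - (1/3:ℝ)^M := by
      rw [Finset.sum_Ico_eq_sum_range]
      have : ∀ i ∈ Finset.range (M - L), (2:ℝ) / 3 ^ (L + i + 1) = 2 / 3 ^ (i + L + 1) := by
        intro i _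
        congr 2
        omega
      rw [Finset.sum_congr rfl this, geom_partial L (M - L)]
      congr 2
      omega
    linarith
  rw [hsplit]
  linarith

lemma Jset_anti {L M : ℕ} (h : L ≤ M) (a : ℕ → Bool) : Jset M a ⊆ Jset L a := by
  intro x hx
  exact ⟨le_trans (eApprox_mono_le h a) hx.1, le_trans hx.2 (eApprox_mono_ub h a)⟩


/-! ### Binary digits -/

def dg (t : ℝ) (i : ℕ) : Bool := decide (⌊t * 2 ^ (i + 1)⌋ % 2 = 1)

def mIdx (L : ℕ) (a : ℕ → Bool) : ℕ := ∑ i ∈ Finset.range L, (a i).toNat * 2 ^ (L - 1 - i)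

lemma mIdx_succ (L : ℕ) (a : ℕ → Bool) : mIdx (L+1) a = 2 * mIdx L a + (a L).toNat := by
  rw [mIdx, Finset.sum_range_succ, mIdx, Finset.mul_sum]
  congr 1
  · apply Finset.sum_congr rfl
    intro i hi
    have hi' : i < L := Finset.mem_range.mp hi
    have h : L + 1 - 1 - i = (L - 1 - i) + 1 := by omega
    rw [h, pow_succ]
    ring
  · simp

lemma mIdx_lt (L : ℕ) (a : ℕ → Bool) : mIdx L a < 2 ^ L := by
  induction L with
  | zero => simp [mIdx]
  | succ L ih =>
    rw [mIdx_succ, pow_succ]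
    have : (a L).toNat ≤ 1 := Bool.toNat_le _
    omega

lemma mem_Ico_iff_floor (N : ℕ) (k : ℤ) (t : ℝ) :
    t ∈ Ico ((k:ℝ)/2^N) (((k:ℝ)+1)/2^N) ↔ ⌊t * 2^N⌋ = k := by
  have hp : (0:ℝ) < 2^N := by positivity
  rw [Set.mem_Ico, div_le_iff₀ hp, lt_div_iff₀ hp, Int.floor_eq_iff]

lemma dyadic_set (L : ℕ) (a : ℕ → Bool) :
    {t : ℝ | t ∈ Ico (0:ℝ) 1 ∧ ∀ i < L, dg t i = a i} =
      Ico ((mIdx L a : ℝ) / 2 ^ L) (((mIdx L a : ℝ) + 1) / 2 ^ L) := by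
  induction L with
  | zero =>
    ext t
    simp [mIdx]
  | succ L ih =>
    ext t
    simp only [Set.mem_setOf_eq]
    have hsplit : (t ∈ Ico (0:ℝ) 1 ∧ ∀ i < L + 1, dg t i = a i) ↔
        ((t ∈ Ico (0:ℝ) 1 ∧ ∀ i < L, dg t i = a i) ∧ dg t L = a L) := by
      constructor
      · rintro ⟨h1, h2⟩
        exact ⟨⟨h1, fun i hi => h2 i (by omega)⟩, h2 L (by omega)⟩
      · rintro ⟨⟨h1, h2⟩, h3⟩
        refine ⟨h1, fun i hi => ?_⟩
        rcases Nat.lt_succ_iff_lt_or_eq.mp hi with hi' | rfl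
        · exact h2 i hi'
        · exact h3
    have hL : (t ∈ Ico (0:ℝ) 1 ∧ ∀ i < L, dg t i = a i) ↔ ⌊t * 2^L⌋ = (mIdx L a : ℤ) := by
      rw [← mem_Ico_iff_floor]
      have h1 : t ∈ {t : ℝ | t ∈ Ico (0:ℝ) 1 ∧ ∀ i < L, dg t i = a i} ↔
          t ∈ Ico ((mIdx L a : ℝ) / 2 ^ L) (((mIdx L a : ℝ) + 1) / 2 ^ L) := by rw [ih]
      simp only [Set.mem_setOf_eq] at h1
      rw [h1]
      push_cast
      all_goals tauto
    have hL1 : t ∈ Ico (((mIdx (L+1) a : ℝ)) / 2 ^ (L+1)) (((mIdx (L+1) a : ℝ) + 1) / 2 ^ (L+1)) ↔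
        ⌊t * 2^(L+1)⌋ = ((mIdx (L+1) a : ℤ)) := by
      rw [← mem_Ico_iff_floor]
      push_cast
      all_goals tauto
    rw [hsplit, hL, hL1, mIdx_succ]
    set m := mIdx L a with hm
    have hpow : (0:ℝ) < 2 ^ (L+1) := by positivity
    have hpowL : (0:ℝ) < 2 ^ L := by positivity
    have hpows : (2:ℝ) ^ (L+1) = 2 ^ L * 2 := by rw [pow_succ]
    have htn : (a L).toNat ≤ 1 := Bool.toNat_le _
    constructor
    · rintro ⟨hfl, hd⟩
      obtain ⟨hf1, hf2⟩ := Int.floor_eq_iff.mp hfl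
      push_cast at hf1 hf2
      have hlb : 2 * (m:ℝ) ≤ t * 2 ^ (L+1) := by rw [hpows]; nlinarith
      have hub : t * 2 ^ (L+1) < 2 * (m:ℝ) + 2 := by rw [hpows]; nlinarith
      have hnl : (2 * (m:ℤ)) ≤ ⌊t * 2 ^ (L+1)⌋ := by
        apply Int.le_floor.mpr; push_cast; exact hlb
      have hnu : ⌊t * 2 ^ (L+1)⌋ < 2 * (m:ℤ) + 2 := by
        apply Int.floor_lt.mpr; push_cast; exact hub
      cases hA : a L
      · rw [hA] at hd
        have hmod : ¬ (⌊t * 2 ^ (L+1)⌋ % 2 = 1) := by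
          intro hmod
          rw [dg] at hd
          simp [hmod] at hd
        simp only [Bool.toNat_false]
        push_cast
        omega
      · rw [hA] at hd
        have hmod : ⌊t * 2 ^ (L+1)⌋ % 2 = 1 := by
          by_contra hmod
          rw [dg] at hd
          simp [hmod] at hd
        simp only [Bool.toNat_true]
        push_cast
        omega
    · intro hfl'
      obtain ⟨hf1, hf2⟩ := Int.floor_eq_iff.mp hfl'
      push_cast at hf1 hf2
      have h1 : (m:ℝ) ≤ t * 2 ^ L := by
        rw [hpows] at hf1
        nlinarith
      have h2 : t * 2 ^ L < (m:ℝ) + 1 := by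
        rw [hpows] at hf2
        have : ((a L).toNat : ℝ) ≤ 1 := by exact_mod_cast htn
        nlinarith
      constructor
      · apply Int.floor_eq_iff.mpr
        constructor
        · push_cast; exact h1
        · push_cast; exact h2
      · have hmod : ⌊t * 2 ^ (L+1)⌋ % 2 = ((a L).toNat : ℤ) % 2 := by
          rw [hfl']
          push_cast
          omega
        cases hA : a L
        · rw [hA] at hmod
          rw [dg]
          simp only [Bool.toNat_false] at hmod
          simp [hmod]
        · rw [hA] at hmod
          rw [dg]
          simp only [Bool.toNat_true] at hmod
          simp [hmod]

lemma dyadic_vol (L : ℕ) (a : ℕ → Bool) :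
    volume {t : ℝ | t ∈ Ico (0:ℝ) 1 ∧ ∀ i < L, dg t i = a i} = ENNReal.ofReal ((1:ℝ)/2^L) := by
  rw [dyadic_set, Real.volume_Ico]
  congr 1
  field_simp
  ring


/-! ### The Cantor-Lebesgue measure as a pushforward -/

def gmap (t : ℝ) : ℝ := cfun (dg t)

lemma measurable_gmap : Measurable gmap := by
  have hterm : ∀ i : ℕ, Measurable (fun t => cbit (dg t i) / 3 ^ (i+1) : ℝ → ℝ) := by
    intro i
    apply Measurable.div_const
    have : (fun t => cbit (dg t i)) =
        (fun n : ℤ => cbit (decide (n % 2 = 1))) ∘ (fun t : ℝ => ⌊t * 2 ^ (i+1)⌋) := by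
      funext t
      simp [dg]
    rw [this]
    exact (measurable_from_top).comp (Int.measurable_floor.comp (measurable_id.mul_const _))
  apply measurable_of_tendsto_metrizable (f := fun N t => eApprox N (dg t))
  · intro N
    simp only [eApprox]
    exact Finset.measurable_sum _ (fun i _ => hterm i)
  · rw [tendsto_pi_nhds]
    intro t
    exact (summable_cbit (dg t)).hasSum.tendsto_sum_nat

def nuC : Measure ℝ := Measure.map gmap (volume.restrict (Ico 0 1))

lemma nuC_apply {A : Set ℝ} (hA : MeasurableSet A) :
    nuC A = volume (gmap ⁻¹' A ∩ Ico 0 1) := by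
  rw [nuC, Measure.map_apply measurable_gmap hA,
    Measure.restrict_apply (measurable_gmap hA)]

lemma gmap_mem_Jset (t : ℝ) (L : ℕ) : gmap t ∈ Jset L (dg t) := cfun_mem_Jset L (dg t)

lemma gmap_mem_cantorSet (t : ℝ) : gmap t ∈ cantorSet := cfun_mem_cantorSet (dg t)

lemma Jset_eq_of_agree {L : ℕ} {a a' : ℕ → Bool} (h : ∀ i < L, a i = a' i) :
    Jset L a = Jset L a' := by
  rw [Jset, Jset, eApprox_congr h]

lemma measurableSet_Jset (L : ℕ) (a : ℕ → Bool) : MeasurableSet (Jset L a) := by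
  rw [Jset]; exact measurableSet_Icc

lemma nuC_Jset_ge (L : ℕ) (a : ℕ → Bool) :
    ENNReal.ofReal ((1:ℝ)/2^L) ≤ nuC (Jset L a) := by
  rw [nuC_apply (measurableSet_Jset L a), ← dyadic_vol L a]
  apply measure_mono
  rintro t ⟨ht0, ht1⟩
  refine ⟨?_, ht0⟩
  rw [Set.mem_preimage, ← Jset_eq_of_agree ht1]
  exact gmap_mem_Jset t L

lemma Jset_gap {L : ℕ} {a a' : ℕ → Bool} (h : ∃ i < L, a i ≠ a' i) {x y : ℝ}
    (hx : x ∈ Jset L a) (hy : y ∈ Jset L a') : (1/3:ℝ)^L ≤ |x - y| := by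
  have hsep := eApprox_sep L a a' h
  obtain ⟨hx1, hx2⟩ := hx
  obtain ⟨hy1, hy2⟩ := hy
  rcases le_total (eApprox L a) (eApprox L a') with hle | hle
  · have habs : eApprox L a' - eApprox L a ≥ 2 * (1/3:ℝ)^L := by
      rw [abs_sub_comm, abs_of_nonneg (by linarith)] at hsep
      linarith
    have : y - x ≥ (1/3:ℝ)^L := by linarith
    calc (1/3:ℝ)^L ≤ y - x := this
    _ ≤ |x - y| := by rw [abs_sub_comm]; exact le_abs_self _
  · have habs : eApprox L a - eApprox L a' ≥ 2 * (1/3:ℝ)^L := by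
      rw [abs_of_nonneg (by linarith)] at hsep
      linarith
    have : x - y ≥ (1/3:ℝ)^L := by linarith
    calc (1/3:ℝ)^L ≤ x - y := this
    _ ≤ |x - y| := le_abs_self _

lemma nuC_Jset_le (L : ℕ) (a : ℕ → Bool) :
    nuC (Jset L a) ≤ ENNReal.ofReal ((1:ℝ)/2^L) := by
  rw [nuC_apply (measurableSet_Jset L a), ← dyadic_vol L a]
  apply measure_mono
  rintro t ⟨ht1, ht0⟩
  refine ⟨ht0, fun i hi => ?_⟩
  by_contra hne
  have hgap := Jset_gap ⟨i, hi, hne⟩ (gmap_mem_Jset t L) ht1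
  simp only [sub_self, abs_zero] at hgap
  have : (0:ℝ) < (1/3)^L := by positivity
  linarith

lemma measurable_cantorSet : MeasurableSet cantorSet :=
  isClosed_cantorSet.measurableSet

/-! ### rpow facts -/

lemma cantorDim_pos : 0 < cantorDim :=
  div_pos (Real.log_pos (by norm_num)) (Real.log_pos (by norm_num))

lemma rpow_third_cantorDim : ((1/3:ℝ)) ^ cantorDim = 1/2 := by
  rw [Real.rpow_def_of_pos (by norm_num : (0:ℝ) < 1/3)]
  rw [one_div, Real.log_inv, cantorDim]
  have h3 : Real.log 3 ≠ 0 := ne_of_gt (Real.log_pos (by norm_num))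
  have : -Real.log 3 * (Real.log 2 / Real.log 3) = -Real.log 2 := by
    field_simp
  rw [this, Real.exp_neg, Real.exp_log (by norm_num)]
  norm_num

lemma rpow_pow_cantorDim (L : ℕ) : ((1/3:ℝ)^L) ^ cantorDim = (1/2:ℝ)^L := by
  have h1 : ((1/3:ℝ)^L) ^ cantorDim = ((1/3:ℝ) ^ cantorDim)^L := by
    rw [← Real.rpow_natCast (1/3:ℝ) L, ← Real.rpow_mul (by norm_num : (0:ℝ) ≤ 1/3),
      mul_comm, Real.rpow_mul (by norm_num : (0:ℝ) ≤ 1/3), Real.rpow_natCast]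
  rw [h1, rpow_third_cantorDim]

lemma ediam_Jset (L : ℕ) (a : ℕ → Bool) :
    Metric.ediam (Jset L a) = ENNReal.ofReal ((1/3:ℝ)^L) := by
  rw [Jset, Real.ediam_Icc]
  congr 1
  ring

open Classical in
lemma nuC_outside (L : ℕ) :
    nuC ((⋃ v : Fin L → Bool, Jset L (extW L v))ᶜ) = 0 := by
  have hmeas : MeasurableSet ((⋃ v : Fin L → Bool, Jset L (extW L v))ᶜ) :=
    (MeasurableSet.iUnion (fun v => measurableSet_Jset _ _)).compl
  rw [nuC_apply hmeas]
  have hempty : gmap ⁻¹' ((⋃ v : Fin L → Bool, Jset L (extW L v))ᶜ) ∩ Ico (0:ℝ) 1 = ∅ := by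
    rw [Set.eq_empty_iff_forall_notMem]
    rintro t ⟨htp, hti⟩
    apply htp
    refine Set.mem_iUnion.mpr ⟨fun j => dg t j, ?_⟩
    have : Jset L (extW L (fun j => dg t j)) = Jset L (dg t) :=
      Jset_eq_of_agree fun i hi => extW_lt _ hi
    rw [this]
    exact gmap_mem_Jset t L
  rw [hempty]
  exact measure_empty

lemma nuC_small {s : Set ℝ} {L : ℕ} (hd : ∀ x ∈ s, ∀ y ∈ s, |x - y| < (1/3:ℝ)^L) :
    nuC s ≤ ENNReal.ofReal ((1:ℝ)/2^L) := by
  by_cases hex : ∃ x₀ ∈ s, x₀ ∈ ⋃ v : Fin L → Bool, Jset L (extW L v)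
  · obtain ⟨x₀, hx₀s, hx₀⟩ := hex
    obtain ⟨v₀, hv₀⟩ := Set.mem_iUnion.mp hx₀
    have hcover : s ⊆ (⋃ v : Fin L → Bool, Jset L (extW L v))ᶜ ∪ Jset L (extW L v₀) := by
      intro x hx
      by_cases hxU : x ∈ ⋃ v : Fin L → Bool, Jset L (extW L v)
      · obtain ⟨v, hv⟩ := Set.mem_iUnion.mp hxU
        right
        by_cases hagree : ∀ i < L, extW L v i = extW L v₀ i
        · rwa [Jset_eq_of_agree hagree] at hv
        · push_neg at hagree
          obtain ⟨i, hi, hne⟩ := hagree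
          have hgap := Jset_gap ⟨i, hi, hne⟩ hv hv₀
          exact absurd (hd x hx x₀ hx₀s) (not_lt.mpr hgap)
      · left; exact hxU
    calc nuC s ≤ nuC ((⋃ v : Fin L → Bool, Jset L (extW L v))ᶜ ∪ Jset L (extW L v₀)) :=
          measure_mono hcover
    _ ≤ nuC ((⋃ v : Fin L → Bool, Jset L (extW L v))ᶜ) + nuC (Jset L (extW L v₀)) :=
          measure_union_le _ _
    _ ≤ 0 + ENNReal.ofReal ((1:ℝ)/2^L) := by
          rw [nuC_outside]
          exact add_le_add le_rfl (nuC_Jset_le L _)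
    _ = ENNReal.ofReal ((1:ℝ)/2^L) := zero_add _
  · push_neg at hex
    calc nuC s ≤ nuC ((⋃ v : Fin L → Bool, Jset L (extW L v))ᶜ) :=
          measure_mono fun x hx => hex x hx
    _ = 0 := nuC_outside L
    _ ≤ _ := zero_le

lemma frostman : (2:ℝ≥0∞)⁻¹ • nuC ≤ μH[cantorDim] := by
  apply MeasureTheory.Measure.le_hausdorffMeasure _ _ (ENNReal.ofReal (1/3))
    (ENNReal.ofReal_pos.mpr (by norm_num))
  intro s hs
  have hsmul : ((2:ℝ≥0∞)⁻¹ • nuC) s = 2⁻¹ * nuC s := rfl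
  by_cases hzero : Metric.ediam s = 0
  · have hL : ∀ L : ℕ, nuC s ≤ ENNReal.ofReal ((1:ℝ)/2^L) := by
      intro L
      apply nuC_small
      intro x hx y hy
      have h1 : edist x y ≤ Metric.ediam s := Metric.edist_le_ediam_of_mem hx hy
      rw [hzero] at h1
      have hxy : x = y := edist_eq_zero.mp (le_antisymm h1 zero_le)
      rw [hxy, sub_self, abs_zero]
      positivity
    have h0 : nuC s = 0 := by
      have htend : Filter.Tendsto (fun L : ℕ => ENNReal.ofReal ((1:ℝ)/2^L)) Filter.atTop (nhds 0) := by
        rw [← ENNReal.ofReal_zero]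
        apply ENNReal.tendsto_ofReal
        have : (fun L : ℕ => (1:ℝ)/2^L) = fun L : ℕ => (1/2:ℝ)^L := by
          funext L
          rw [div_pow, one_pow]
        rw [this]
        exact tendsto_pow_atTop_nhds_zero_of_lt_one (by norm_num) (by norm_num)
      exact le_antisymm (ge_of_tendsto' htend hL) zero_le
    rw [hsmul, h0, mul_zero]
    exact zero_le
  · set dr := (Metric.ediam s).toReal with hdr
    have hne : Metric.ediam s ≠ ⊤ :=
      ne_top_of_le_ne_top ENNReal.ofReal_ne_top hs
    have hdrpos : 0 < dr := ENNReal.toReal_pos hzero hne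
    have hdr13 : dr ≤ 1/3 := by
      have := ENNReal.toReal_mono ENNReal.ofReal_ne_top hs
      rwa [ENNReal.toReal_ofReal (by norm_num)] at this
    have hexL : ∃ k, (1/3:ℝ)^k ≤ dr := by
      obtain ⟨n, hn⟩ := exists_pow_lt_of_lt_one hdrpos (by norm_num : (1/3:ℝ) < 1)
      exact ⟨n, hn.le⟩
    classical
    set k₀ := Nat.find hexL with hk₀def
    have hk₀ : (1/3:ℝ)^k₀ ≤ dr := Nat.find_spec hexL
    have hk₀0 : k₀ ≠ 0 := by
      intro h
      rw [h, pow_zero] at hk₀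
      linarith
    set L := k₀ - 1 with hLdef
    have hk₀L : k₀ = L + 1 := by omega
    have hnotP : ¬ ((1/3:ℝ)^L ≤ dr) := Nat.find_min hexL (by omega)
    push_neg at hnotP
    have hP : (1/3:ℝ)^(L+1) ≤ dr := by rw [← hk₀L]; exact hk₀
    have hbdd : Bornology.IsBounded s := Metric.isBounded_iff_ediam_ne_top.mpr hne
    have hsmall : nuC s ≤ ENNReal.ofReal ((1:ℝ)/2^L) := by
      apply nuC_small
      intro x hx y hy
      calc |x - y| = dist x y := (Real.dist_eq x y).symm
      _ ≤ Metric.diam s := Metric.dist_le_diam_of_mem hbdd hx hy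
      _ = dr := rfl
      _ < (1/3:ℝ)^L := hnotP
    have hgoal : (1:ℝ)/2^L ≤ 2 * dr ^ cantorDim := by
      have h1 : ((1/3:ℝ)^(L+1)) ^ cantorDim ≤ dr ^ cantorDim :=
        Real.rpow_le_rpow (by positivity) hP (le_of_lt cantorDim_pos)
      rw [rpow_pow_cantorDim] at h1
      have h2 : (1/2:ℝ)^(L+1) = (1/2)^L / 2 := by rw [pow_succ]; ring
      have h3 : (1:ℝ)/2^L = (1/2:ℝ)^L := by rw [div_pow, one_pow]
      rw [h2] at h1
      rw [h3]
      linarith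
    rw [hsmul]
    have hdiam : Metric.ediam s = ENNReal.ofReal dr := (ENNReal.ofReal_toReal hne).symm
    rw [hdiam, ENNReal.ofReal_rpow_of_pos hdrpos]
    calc 2⁻¹ * nuC s ≤ 2⁻¹ * ENNReal.ofReal ((1:ℝ)/2^L) := by gcongr
    _ ≤ 2⁻¹ * ENNReal.ofReal (2 * dr ^ cantorDim) := by
        gcongr
    _ = 2⁻¹ * (2 * ENNReal.ofReal (dr ^ cantorDim)) := by
        rw [ENNReal.ofReal_mul (by norm_num : (0:ℝ) ≤ 2), ENNReal.ofReal_ofNat]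
    _ = ENNReal.ofReal (dr ^ cantorDim) := by
        rw [← mul_assoc, ENNReal.inv_mul_cancel (by norm_num) ENNReal.ofNat_ne_top, one_mul]

lemma nuC_le_haus {A : Set ℝ} (hA : MeasurableSet A) :
    nuC A ≤ 2 * μH[cantorDim] (A ∩ cantorSet) := by
  have h1 : nuC A = nuC (A ∩ cantorSet) := by
    rw [nuC_apply hA, nuC_apply (hA.inter measurable_cantorSet)]
    congr 1
    ext t
    constructor
    · rintro ⟨htA, hti⟩
      exact ⟨⟨htA, gmap_mem_cantorSet t⟩, hti⟩
    · rintro ⟨⟨htA, _⟩, hti⟩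
      exact ⟨htA, hti⟩
  have h2 : (2:ℝ≥0∞)⁻¹ * nuC (A ∩ cantorSet) ≤ μH[cantorDim] (A ∩ cantorSet) :=
    Measure.le_iff.mp frostman _ (hA.inter measurable_cantorSet)
  rw [h1]
  calc nuC (A ∩ cantorSet) = 2 * (2⁻¹ * nuC (A ∩ cantorSet)) := by
        rw [← mul_assoc, ENNReal.mul_inv_cancel (by norm_num) ENNReal.ofNat_ne_top, one_mul]
  _ ≤ 2 * μH[cantorDim] (A ∩ cantorSet) := by gcongr


/-! ### Covering upper bound -/

open Classical in
noncomputable def goodW (L : ℕ) (S : Set ℝ) : Finset (Fin L → Bool) :=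
  Finset.univ.filter (fun v => (Jset L (extW L v) ∩ S).Nonempty)

lemma extW_agree {L M : ℕ} (h : L ≤ M) (v : Fin M → Bool) :
    ∀ i < L, extW M v i = extW L (fun j : Fin L => v ⟨j, lt_of_lt_of_le j.2 h⟩) i := by
  intro i hi
  rw [extW_lt _ (lt_of_lt_of_le hi h), extW_lt _ hi]

lemma card_goodW_le {L M : ℕ} (h : L ≤ M) (S : Set ℝ) :
    (goodW M S).card ≤ (goodW L S).card * 2 ^ (M - L) := by
  classical
  set f : (Fin M → Bool) → (Fin L → Bool) × (Fin (M - L) → Bool) :=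
    fun v => (fun j => v ⟨j, lt_of_lt_of_le j.2 h⟩,
              fun j => v ⟨L + j, by omega⟩) with hf
  have hmaps : ∀ v ∈ goodW M S, f v ∈ (goodW L S) ×ˢ (Finset.univ : Finset (Fin (M-L) → Bool)) := by
    intro v hv
    rw [goodW, Finset.mem_filter] at hv
    obtain ⟨-, x, hxJ, hxS⟩ := hv
    rw [Finset.mem_product]
    refine ⟨?_, Finset.mem_univ _⟩
    rw [goodW, Finset.mem_filter]
    refine ⟨Finset.mem_univ _, x, ?_, hxS⟩
    have h1 : x ∈ Jset L (extW M v) := Jset_anti h _ hxJ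
    rwa [Jset_eq_of_agree (extW_agree h v)] at h1
  have hinj : Set.InjOn f (goodW M S) := by
    intro v _ w _ hfw
    have h1 := congrArg Prod.fst hfw
    have h2 := congrArg Prod.snd hfw
    simp only [hf] at h1 h2
    funext k
    by_cases hk : (k : ℕ) < L
    · have h3 := congrFun h1 ⟨k, hk⟩
      have hidx : (⟨((⟨(k:ℕ), hk⟩ : Fin L) : ℕ), lt_of_lt_of_le (⟨(k:ℕ), hk⟩ : Fin L).2 h⟩ : Fin M) = k :=
        Fin.ext rfl
      rwa [hidx] at h3
    · have hk2 : (k:ℕ) - L < M - L := by omega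
      have h3 := congrFun h2 ⟨(k:ℕ) - L, hk2⟩
      have hidx : (⟨L + ((⟨(k:ℕ) - L, hk2⟩ : Fin (M - L)) : ℕ), by omega⟩ : Fin M) = k :=
        Fin.ext (by simp; omega)
      rwa [hidx] at h3
  calc (goodW M S).card ≤ ((goodW L S) ×ˢ (Finset.univ : Finset (Fin (M-L) → Bool))).card :=
        Finset.card_le_card_of_injOn f hmaps hinj
  _ = (goodW L S).card * 2 ^ (M - L) := by
      rw [Finset.card_product, Finset.card_univ]
      congr 1
      rw [Fintype.card_fun, Fintype.card_bool, Fintype.card_fin]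

lemma haus_le_count (S : Set ℝ) (hS : S ⊆ cantorSet) (L : ℕ) :
    μH[cantorDim] S ≤ (goodW L S).card * ENNReal.ofReal ((1/2:ℝ)^L) := by
  classical
  set t : ∀ M : ℕ, (Fin M → Bool) → Set ℝ :=
    fun M v => if (Jset M (extW M v) ∩ S).Nonempty then Jset M (extW M v) else ∅ with ht
  have hr : Filter.Tendsto (fun M : ℕ => ENNReal.ofReal ((1/3:ℝ)^M)) Filter.atTop (nhds 0) := by
    rw [← ENNReal.ofReal_zero]
    exact ENNReal.tendsto_ofReal
      (tendsto_pow_atTop_nhds_zero_of_lt_one (by norm_num) (by norm_num))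
  have hdi : ∀ᶠ M in Filter.atTop, ∀ v : Fin M → Bool,
      Metric.ediam (t M v) ≤ ENNReal.ofReal ((1/3:ℝ)^M) := by
    apply Filter.Eventually.of_forall
    intro M v
    simp only [ht]
    split
    · rw [ediam_Jset]
    · rw [Metric.ediam_empty]
      exact zero_le
  have hcov : ∀ᶠ M in Filter.atTop, S ⊆ ⋃ v : Fin M → Bool, t M v := by
    apply Filter.Eventually.of_forall
    intro M x hx
    obtain ⟨v, hv⟩ := Set.mem_iUnion.mp (cantorSet_subset_iUnion M (hS hx))
    refine Set.mem_iUnion.mpr ⟨v, ?_⟩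
    simp only [ht]
    rw [if_pos ⟨x, hv, hx⟩]
    exact hv
  have hmain := MeasureTheory.Measure.hausdorffMeasure_le_liminf_sum cantorDim S
    (fun M => ENNReal.ofReal ((1/3:ℝ)^M)) hr t hdi hcov
  refine hmain.trans ?_
  apply Filter.liminf_le_of_frequently_le'
  apply Filter.Eventually.frequently
  filter_upwards [Filter.eventually_ge_atTop L] with M hM
  have hsum : ∑ v : Fin M → Bool, Metric.ediam (t M v) ^ cantorDim
      = ((goodW M S).card : ℝ≥0∞) * ENNReal.ofReal ((1/2:ℝ)^M) := by
    have hterm : ∀ v : Fin M → Bool, Metric.ediam (t M v) ^ cantorDim =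
        if (Jset M (extW M v) ∩ S).Nonempty then ENNReal.ofReal ((1/2:ℝ)^M) else 0 := by
      intro v
      simp only [ht]
      split
      · rw [ediam_Jset, ENNReal.ofReal_rpow_of_pos (by positivity), rpow_pow_cantorDim]
      · rw [Metric.ediam_empty, ENNReal.zero_rpow_of_pos cantorDim_pos]
    rw [Finset.sum_congr rfl (fun v _ => hterm v), Finset.sum_ite, Finset.sum_const,
      Finset.sum_const, smul_zero, add_zero, nsmul_eq_mul]
    rfl
  rw [hsum]
  have hcast : ((goodW M S).card : ℝ≥0∞) ≤ ((goodW L S).card : ℝ≥0∞) * 2 ^ (M - L) := by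
    have := card_goodW_le hM S
    exact_mod_cast this
  calc ((goodW M S).card : ℝ≥0∞) * ENNReal.ofReal ((1/2:ℝ)^M)
      ≤ (((goodW L S).card : ℝ≥0∞) * 2 ^ (M - L)) * ENNReal.ofReal ((1/2:ℝ)^M) := by gcongr
  _ = ((goodW L S).card : ℝ≥0∞) * ENNReal.ofReal ((1/2:ℝ)^L) := by
      rw [mul_assoc]
      congr 1
      have h2 : ((2:ℝ≥0∞) ^ (M - L)) = ENNReal.ofReal ((2:ℝ)^(M-L)) := by
        rw [ENNReal.ofReal_pow (by norm_num)]
        norm_num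
      rw [h2, ← ENNReal.ofReal_mul (by positivity)]
      congr 1
      have hML : M - L + L = M := by omega
      have h3 : (1/2:ℝ)^M = (1/2)^(M-L) * (1/2)^L := by rw [← pow_add, hML]
      rw [h3, ← mul_assoc, ← mul_pow]
      norm_num



/-! ### Endpoints -/

lemma eApprox_mem_endpoints (L : ℕ) (a : ℕ → Bool) : eApprox L a ∈ cantorEndpoints L := by
  obtain ⟨b, hb, heq⟩ := eApprox_rat L a
  exact ⟨⟨b, by omega, heq⟩, eApprox_mem_cantorSet L a⟩

lemma eApprox_add_mem_endpoints (L : ℕ) (a : ℕ → Bool) :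
    eApprox L a + (1/3:ℝ)^L ∈ cantorEndpoints L := by
  obtain ⟨b, hb, heq⟩ := eApprox_rat L a
  refine ⟨⟨b + 1, by omega, ?_⟩, eApprox_add_mem_cantorSet L a⟩
  rw [heq]
  push_cast
  rw [div_pow, one_pow]
  field_simp

lemma endpoints_sep {L : ℕ} {x y : ℝ} (hx : x ∈ cantorEndpoints L) (hy : y ∈ cantorEndpoints L)
    (hne : x ≠ y) : (1/3:ℝ)^L ≤ |x - y| := by
  obtain ⟨⟨b, hb, rfl⟩, -⟩ := hx
  obtain ⟨⟨c, hc, rfl⟩, -⟩ := hy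
  have hbc : b ≠ c := by rintro rfl; exact hne rfl
  have hbc' : ((b:ℤ) - c) ≠ 0 := sub_ne_zero.mpr (by exact_mod_cast hbc)
  have h1 : (1:ℤ) ≤ |(b:ℤ) - c| := Int.one_le_abs hbc'
  have h1R : (1:ℝ) ≤ |(b:ℝ) - c| := by exact_mod_cast h1
  have hpow : (0:ℝ) < 3^L := by positivity
  have heq2 : (b:ℝ)/3^L - (c:ℝ)/3^L = ((b:ℝ) - c)/3^L := by ring
  rw [heq2, abs_div, abs_of_pos hpow, div_pow, one_pow]
  gcongr

lemma endpoints_finite (L : ℕ) : (cantorEndpoints L).Finite := by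
  apply Set.Finite.subset ((Set.finite_Iic (3^L : ℕ)).image (fun b : ℕ => (b:ℝ)/3^L))
  rintro x ⟨⟨b, hb, rfl⟩, -⟩
  exact ⟨b, hb, rfl⟩

lemma window_ss₁ (L : ℕ) (c d : ℝ) (hd : d ≤ c + (1/3:ℝ)^L) :
    (cantorEndpoints L ∩ {x | c ≤ x ∧ x < d}).Subsingleton := by
  rintro x ⟨hxC, hx1, hx2⟩ y ⟨hyC, hy1, hy2⟩
  by_contra hne
  have hsep := endpoints_sep hxC hyC hne
  have habs : |x - y| < (1/3:ℝ)^L := abs_sub_lt_iff.mpr ⟨by linarith, by linarith⟩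
  linarith

lemma window_ss₂ (L : ℕ) (c d : ℝ) (hd : d ≤ c + (1/3:ℝ)^L) :
    (cantorEndpoints L ∩ {x | c < x ∧ x ≤ d}).Subsingleton := by
  rintro x ⟨hxC, hx1, hx2⟩ y ⟨hyC, hy1, hy2⟩
  by_contra hne
  have hsep := endpoints_sep hxC hyC hne
  have habs : |x - y| < (1/3:ℝ)^L := abs_sub_lt_iff.mpr ⟨by linarith, by linarith⟩
  linarith

lemma ncard_subsingleton_le {s : Set ℝ} (h : s.Subsingleton) : s.ncard ≤ 1 := by
  rcases h.eq_empty_or_singleton with rfl | ⟨x, rfl⟩ <;> simp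

lemma ncard_two_windows (L : ℕ) (z R R' : ℝ) (h : R' ≤ R + (1/3:ℝ)^L) :
    (cantorEndpoints L ∩ ball z R').ncard ≤ (cantorEndpoints L ∩ ball z R).ncard + 2 := by
  set p := (1/3:ℝ)^L with hp
  have hppos : 0 < p := by positivity
  set W₁ := cantorEndpoints L ∩ {x | z + R ≤ x ∧ x < z + R + p} with hW₁
  set W₂ := cantorEndpoints L ∩ {x | z - R - p < x ∧ x ≤ z - R} with hW₂
  have hsub : cantorEndpoints L ∩ ball z R' ⊆
      (cantorEndpoints L ∩ ball z R) ∪ (W₁ ∪ W₂) := by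
    rintro x ⟨hxC, hxB⟩
    rw [mem_ball, Real.dist_eq] at hxB
    by_cases hxr : |x - z| < R
    · left; exact ⟨hxC, by rwa [mem_ball, Real.dist_eq]⟩
    · push_neg at hxr
      right
      have hxB' : |x - z| < R + p := lt_of_lt_of_le hxB h
      rcases le_or_gt z x with hzx | hzx
      · left
        rw [abs_of_nonneg (by linarith)] at hxr hxB'
        exact ⟨hxC, by linarith, by linarith⟩
      · right
        rw [abs_of_neg (by linarith)] at hxr hxB'
        exact ⟨hxC, by linarith, by linarith⟩
  have hfin : ∀ s : Set ℝ, s ⊆ cantorEndpoints L → s.Finite := by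
    intro s hs
    exact (endpoints_finite L).subset hs
  have hfin₁ : W₁.Finite := hfin _ Set.inter_subset_left
  have hfin₂ : W₂.Finite := hfin _ Set.inter_subset_left
  have hfin₀ : (cantorEndpoints L ∩ ball z R).Finite := hfin _ Set.inter_subset_left
  calc (cantorEndpoints L ∩ ball z R').ncard
      ≤ ((cantorEndpoints L ∩ ball z R) ∪ (W₁ ∪ W₂)).ncard :=
        Set.ncard_le_ncard hsub (Set.Finite.union hfin₀ (Set.Finite.union hfin₁ hfin₂))
  _ ≤ (cantorEndpoints L ∩ ball z R).ncard + (W₁ ∪ W₂).ncard :=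
        Set.ncard_union_le _ _
  _ ≤ (cantorEndpoints L ∩ ball z R).ncard + (W₁.ncard + W₂.ncard) := by
        have := Set.ncard_union_le W₁ W₂
        omega
  _ ≤ (cantorEndpoints L ∩ ball z R).ncard + 2 := by
        have h1 := ncard_subsingleton_le (window_ss₁ L (z + R) (z + R + p) le_rfl)
        have h2 := ncard_subsingleton_le (window_ss₂ L (z - R - p) (z - R) (by linarith))
        rw [hW₁, hW₂, hp] at *
        omega

lemma exists_endpoint_near {z : ℝ} (hz : z ∈ cantorSet) (L : ℕ) :
    ∃ x ∈ cantorEndpoints L, |x - z| ≤ (1/3:ℝ)^L / 2 := by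
  obtain ⟨v, hv⟩ := Set.mem_iUnion.mp (cantorSet_subset_iUnion L hz)
  obtain ⟨h1, h2⟩ := hv
  set e := eApprox L (extW L v) with he
  rcases le_or_gt z (e + (1/3:ℝ)^L / 2) with hle | hlt
  · refine ⟨e, eApprox_mem_endpoints L _, ?_⟩
    rw [abs_of_nonpos (by linarith)]
    linarith
  · refine ⟨e + (1/3:ℝ)^L, eApprox_add_mem_endpoints L _, ?_⟩
    rw [abs_of_nonneg (by linarith)]
    linarith

lemma nuC_ball_endpoint {x : ℝ} (hx : x ∈ cantorSet) (L : ℕ) :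
    ENNReal.ofReal ((1/2:ℝ)^(L+1)) ≤ nuC (ball x ((1/3:ℝ)^L / 2)) := by
  obtain ⟨v, hv⟩ := Set.mem_iUnion.mp (cantorSet_subset_iUnion (L+1) hx)
  obtain ⟨hx1, hx2⟩ := hv
  have hps : (1/3:ℝ)^(L+1) < (1/3:ℝ)^L / 2 := by
    rw [pow_succ]
    have h0 : (0:ℝ) < (1/3:ℝ)^L := by positivity
    linarith
  have hsub : Jset (L+1) (extW (L+1) v) ⊆ ball x ((1/3:ℝ)^L / 2) := by
    rintro y ⟨hy1, hy2⟩
    rw [mem_ball, Real.dist_eq]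
    rw [abs_sub_lt_iff]
    constructor <;> linarith
  calc ENNReal.ofReal ((1/2:ℝ)^(L+1)) = ENNReal.ofReal ((1:ℝ)/2^(L+1)) := by
        rw [div_pow, one_pow]
  _ ≤ nuC (Jset (L+1) (extW (L+1) v)) := nuC_Jset_ge _ _
  _ ≤ nuC (ball x ((1/3:ℝ)^L / 2)) := measure_mono hsub

/-! ### Main estimates -/

open Classical in
lemma card_goodW_le_ncard (L : ℕ) (z r : ℝ) :
    (goodW L (cantorSet ∩ ball z r)).card ≤
      (cantorEndpoints L ∩ ball z (r + (1/3:ℝ)^L)).ncard := by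
  set f : (Fin L → Bool) → ℝ := fun v => eApprox L (extW L v) with hf
  have hmaps : ∀ v ∈ goodW L (cantorSet ∩ ball z r),
      f v ∈ cantorEndpoints L ∩ ball z (r + (1/3:ℝ)^L) := by
    intro v hv
    rw [goodW, Finset.mem_filter] at hv
    obtain ⟨-, x, hxJ, hxK, hxB⟩ := hv
    refine ⟨eApprox_mem_endpoints L _, ?_⟩
    rw [mem_ball, Real.dist_eq] at hxB ⊢
    obtain ⟨hj1, hj2⟩ := hxJ
    have habs : |f v - x| ≤ (1/3:ℝ)^L := by
      rw [abs_of_nonpos (by simp only [hf]; linarith)]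
      simp only [hf]
      linarith
    calc |f v - z| ≤ |f v - x| + |x - z| := abs_sub_le _ _ _
    _ < (1/3:ℝ)^L + r := by
        have h0 : (0:ℝ) ≤ (1/3:ℝ)^L := by positivity
        apply add_lt_add_of_le_of_lt habs hxB
    _ = r + (1/3:ℝ)^L := by ring
  have hinj : Set.InjOn f (goodW L (cantorSet ∩ ball z r)) := by
    intro v _ w _ hvw
    by_contra hne
    have hex : ∃ j : Fin L, v j ≠ w j := by
      by_contra hall
      push_neg at hall
      exact hne (funext hall)
    obtain ⟨j, hj⟩ := hex
    have hdiff : ∃ i < L, extW L v i ≠ extW L w i := by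
      refine ⟨j, j.2, ?_⟩
      rw [extW_lt _ j.2, extW_lt _ j.2]
      simpa using hj
    have hsep := eApprox_sep L _ _ hdiff
    simp only [hf] at hvw
    rw [hvw, sub_self, abs_zero] at hsep
    have h0 : (0:ℝ) < (1/3:ℝ)^L := by positivity
    linarith
  calc (goodW L (cantorSet ∩ ball z r)).card
      = ((goodW L (cantorSet ∩ ball z r)).image f).card :=
        (Finset.card_image_of_injOn hinj).symm
  _ = (((goodW L (cantorSet ∩ ball z r)).image f : Finset ℝ) : Set ℝ).ncard :=
        (Set.ncard_coe_finset _).symm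
  _ ≤ (cantorEndpoints L ∩ ball z (r + (1/3:ℝ)^L)).ncard := by
      apply Set.ncard_le_ncard _ ((endpoints_finite L).subset Set.inter_subset_left)
      intro x hx
      rw [Finset.coe_image] at hx
      obtain ⟨v, hv, rfl⟩ := hx
      exact hmaps v hv

lemma main_upper (z r : ℝ) (L : ℕ) :
    cantorMeasure (ball z r) ≤
      ((cantorEndpoints L ∩ ball z (r + (1/3:ℝ)^L)).ncard : ℝ≥0∞) *
        ENNReal.ofReal ((1/2:ℝ)^L) := by
  rw [cantorMeasure, Measure.restrict_apply measurableSet_ball]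
  have h1 : μH[cantorDim] (ball z r ∩ cantorSet) ≤
      ((goodW L (cantorSet ∩ ball z r)).card : ℝ≥0∞) * ENNReal.ofReal ((1/2:ℝ)^L) := by
    rw [Set.inter_comm]
    exact haus_le_count _ Set.inter_subset_left L
  refine h1.trans ?_
  gcongr
  exact_mod_cast card_goodW_le_ncard L z r

lemma main_lower (z r : ℝ) (L : ℕ) (hz : z ∈ cantorSet) (h3 : (1/3:ℝ)^L < r) :
    ENNReal.ofReal ((((cantorEndpoints L ∩ ball z r).ncard : ℝ) / 3) * (1/2:ℝ)^(L+2)) ≤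
      cantorMeasure (ball z r) := by
  classical
  set p := (1/3:ℝ)^L with hp
  have hppos : 0 < p := by positivity
  set δ := p / 2 with hδ
  set G := cantorEndpoints L ∩ ball z (r - δ) with hG
  have hGfin : G.Finite := (endpoints_finite L).subset Set.inter_subset_left
  -- each point of G gives mass (1/2)^(L+2)
  have hmass : ∀ x ∈ G, ENNReal.ofReal ((1/2:ℝ)^(L+2)) ≤ cantorMeasure (ball x δ) := by
    rintro x ⟨hxC, -⟩
    have hxK : x ∈ cantorSet := hxC.2
    have h1 := nuC_ball_endpoint hxK L
    have h2 := nuC_le_haus (A := ball x δ) measurableSet_ball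
    have h3' : ENNReal.ofReal ((1/2:ℝ)^(L+1)) ≤ 2 * μH[cantorDim] (ball x δ ∩ cantorSet) :=
      le_trans h1 (by rw [hδ, hp]; exact h2)
    have hkey : (2:ℝ≥0∞) * ENNReal.ofReal ((1/2:ℝ)^(L+2)) = ENNReal.ofReal ((1/2:ℝ)^(L+1)) := by
      rw [← ENNReal.ofReal_ofNat, ← ENNReal.ofReal_mul (by norm_num)]
      congr 1
      rw [pow_succ, pow_succ]
      ring
    rw [cantorMeasure, Measure.restrict_apply measurableSet_ball]
    rw [← ENNReal.mul_le_mul_iff_right (a := (2:ℝ≥0∞)) (by norm_num) ENNReal.ofNat_ne_top, hkey]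
    exact h3'
  -- the balls are disjoint and inside ball z r
  have hdisj : (hGfin.toFinset : Set ℝ).PairwiseDisjoint (fun x => ball x δ) := by
    intro x hx y hy hne
    rw [Set.Finite.coe_toFinset] at hx hy
    apply Metric.ball_disjoint_ball
    rw [Real.dist_eq]
    have := endpoints_sep hx.1 hy.1 hne
    rw [hδ]
    linarith
  have hsubset : (⋃ x ∈ hGfin.toFinset, ball x δ) ⊆ ball z r := by
    intro y hy
    rw [Set.mem_iUnion₂] at hy
    obtain ⟨x, hx, hyx⟩ := hy
    rw [Set.Finite.mem_toFinset] at hx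
    obtain ⟨hxC, hxB⟩ := hx
    rw [mem_ball, Real.dist_eq] at hyx hxB ⊢
    calc |y - z| ≤ |y - x| + |x - z| := abs_sub_le _ _ _
    _ < δ + (r - δ) := add_lt_add hyx hxB
    _ = r := by ring
  have hsum : (G.ncard : ℝ≥0∞) * ENNReal.ofReal ((1/2:ℝ)^(L+2)) ≤ cantorMeasure (ball z r) := by
    calc (G.ncard : ℝ≥0∞) * ENNReal.ofReal ((1/2:ℝ)^(L+2))
        = ∑ x ∈ hGfin.toFinset, ENNReal.ofReal ((1/2:ℝ)^(L+2)) := by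
          rw [Finset.sum_const, nsmul_eq_mul, Set.ncard_eq_toFinset_card G hGfin]
    _ ≤ ∑ x ∈ hGfin.toFinset, cantorMeasure (ball x δ) := by
          apply Finset.sum_le_sum
          intro x hx
          exact hmass x (by rwa [Set.Finite.mem_toFinset] at hx)
    _ = cantorMeasure (⋃ x ∈ hGfin.toFinset, ball x δ) :=
          (measure_biUnion_finset hdisj (fun x _ => measurableSet_ball)).symm
    _ ≤ cantorMeasure (ball z r) := measure_mono hsubset
  -- G is nonempty
  have hGne : 1 ≤ G.ncard := by
    obtain ⟨x, hxC, hxd⟩ := exists_endpoint_near hz L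
    have hxG : x ∈ G := by
      refine ⟨hxC, ?_⟩
      rw [mem_ball, Real.dist_eq]
      have : δ < r - δ := by rw [hδ]; linarith
      calc |x - z| ≤ δ := by rw [hδ, hp] at *; exact hxd
      _ < r - δ := this
    exact (Set.ncard_pos hGfin).mpr ⟨x, hxG⟩
  -- count comparison
  have hcount : (cantorEndpoints L ∩ ball z r).ncard ≤ 3 * G.ncard := by
    have h1 : (cantorEndpoints L ∩ ball z r).ncard ≤ G.ncard + 2 := by
      apply ncard_two_windows L z (r - δ) r
      rw [hδ]
      linarith
    omega
  refine le_trans ?_ hsum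
  rw [← ENNReal.ofReal_natCast G.ncard, ← ENNReal.ofReal_mul (by positivity)]
  apply ENNReal.ofReal_le_ofReal
  have hcR : ((cantorEndpoints L ∩ ball z r).ncard : ℝ) ≤ 3 * (G.ncard : ℝ) := by
    exact_mod_cast hcount
  have h0 : (0:ℝ) < (1/2:ℝ)^(L+2) := by positivity
  rw [div_mul_eq_mul_div, div_le_iff₀ (by norm_num : (0:ℝ) < 3)]
  nlinarith

end

/-- For `I = B(z,r)` with `z ∈ K`, `0 < r < 1` and `L ≥ L₀` with `3^{-L₀}/2 < r/5`, one has
`μ(I) ≍ |C_L ∩ I| / 2^L` with absolute constants; moreover, for any ball `B = B(z,r)`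
(`z ∈ ℝ`, `0 < r < 1`) and any positive integer `L` with `3^{1-L} < r`,
`μ(B) ≤ 2^{-(L-1)} |C_L ∩ 5B|`. -/
theorem measure_of_interval :
    (∃ c₁ c₂ : ℝ, 0 < c₁ ∧ 0 < c₂ ∧ ∀ (z r : ℝ) (L₀ L : ℕ),
      z ∈ cantorSet → 0 < r → r < 1 → 0 < L₀ → L₀ ≤ L →
      (3:ℝ) ^ (-(L₀:ℝ)) / 2 < r / 5 →
      c₁ * (((cantorEndpoints L ∩ ball z r).ncard : ℝ) / 2 ^ L) ≤
          (cantorMeasure (ball z r)).toReal ∧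
        (cantorMeasure (ball z r)).toReal ≤
          c₂ * (((cantorEndpoints L ∩ ball z r).ncard : ℝ) / 2 ^ L)) ∧
    (∀ (z r : ℝ) (L : ℕ), 0 < r → r < 1 → 0 < L → (3:ℝ) ^ (1 - (L:ℝ)) < r →
      (cantorMeasure (ball z r)).toReal ≤
        (2:ℝ) ^ (-((L:ℝ) - 1)) * ((cantorEndpoints L ∩ ball z (5 * r)).ncard : ℝ)) := by
  constructor
  · refine ⟨1/12, 3, by norm_num, by norm_num, ?_⟩
    intro z r L₀ L hz hr hr1 hL₀ hL₀L hrL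
    have hp0 : (3:ℝ) ^ (-(L₀:ℝ)) = (1/3:ℝ)^L₀ := by
      rw [Real.rpow_neg (by norm_num), Real.rpow_natCast, div_pow, one_pow, one_div]
    have hpL : (1/3:ℝ)^L ≤ (1/3:ℝ)^L₀ :=
      pow_le_pow_of_le_one (by norm_num) (by norm_num) hL₀L
    have h3r : (1/3:ℝ)^L < r := by
      rw [hp0] at hrL
      nlinarith
    set N := (cantorEndpoints L ∩ ball z r).ncard with hN
    have hupE : cantorMeasure (ball z r) ≤ ENNReal.ofReal (3 * (N : ℝ) * (1/2:ℝ)^L) := by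
      have h1 := main_upper z r L
      have h2 : (cantorEndpoints L ∩ ball z (r + (1/3:ℝ)^L)).ncard ≤ N + 2 :=
        ncard_two_windows L z r (r + (1/3:ℝ)^L) le_rfl
      have hN1 : 1 ≤ N := by
        obtain ⟨x, hxC, hxd⟩ := exists_endpoint_near hz L
        have hxm : x ∈ cantorEndpoints L ∩ ball z r := by
          refine ⟨hxC, ?_⟩
          rw [mem_ball, Real.dist_eq]
          have h0 : (0:ℝ) < (1/3:ℝ)^L := by positivity
          linarith
        exact (Set.ncard_pos ((endpoints_finite L).subset Set.inter_subset_left)).mpr ⟨x, hxm⟩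
      have h3 : (cantorEndpoints L ∩ ball z (r + (1/3:ℝ)^L)).ncard ≤ 3 * N := by omega
      calc cantorMeasure (ball z r)
          ≤ ((cantorEndpoints L ∩ ball z (r + (1/3:ℝ)^L)).ncard : ℝ≥0∞) *
            ENNReal.ofReal ((1/2:ℝ)^L) := h1
      _ ≤ ((3 * N : ℕ) : ℝ≥0∞) * ENNReal.ofReal ((1/2:ℝ)^L) :=
          mul_le_mul_left (by exact_mod_cast h3) _
      _ = ENNReal.ofReal (3 * (N:ℝ) * (1/2:ℝ)^L) := by
          rw [← ENNReal.ofReal_natCast, ← ENNReal.ofReal_mul (by positivity)]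
          congr 1
          push_cast
          ring
    have hne : cantorMeasure (ball z r) ≠ ⊤ := ne_top_of_le_ne_top ENNReal.ofReal_ne_top hupE
    have hlo := main_lower z r L hz h3r
    constructor
    · have hbound : ((N:ℝ)/3) * (1/2:ℝ)^(L+2) ≤ (cantorMeasure (ball z r)).toReal :=
        (ENNReal.ofReal_le_iff_le_toReal hne).mp hlo
      have heq : (1/12:ℝ) * ((N:ℝ) / 2^L) = ((N:ℝ)/3) * (1/2:ℝ)^(L+2) := by
        rw [div_pow, one_pow, pow_succ, pow_succ]
        ring
      rw [heq]
      exact hbound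
    · have hbound : (cantorMeasure (ball z r)).toReal ≤ 3 * (N:ℝ) * (1/2:ℝ)^L :=
        ENNReal.toReal_le_of_le_ofReal (by positivity) hupE
      have heq : (3:ℝ) * ((N:ℝ) / 2^L) = 3 * (N:ℝ) * (1/2:ℝ)^L := by
        rw [div_pow, one_pow]
        ring
      rw [heq]
      exact hbound
  · intro z r L hr hr1 hL h3L
    have h31 : (3:ℝ) ^ (1 - (L:ℝ)) = 3 * (1/3:ℝ)^L := by
      rw [Real.rpow_sub (by norm_num : (0:ℝ) < 3), Real.rpow_one, Real.rpow_natCast,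
        div_pow, one_pow, div_eq_mul_one_div]
    have hpr : 3 * (1/3:ℝ)^L < r := by rw [h31] at h3L; exact h3L
    have hppos : (0:ℝ) < (1/3:ℝ)^L := by positivity
    have hsub5 : ball z (r + (1/3:ℝ)^L) ⊆ ball z (5 * r) := ball_subset_ball (by linarith)
    set N₅ := (cantorEndpoints L ∩ ball z (5*r)).ncard with hN₅
    have hcount : (cantorEndpoints L ∩ ball z (r + (1/3:ℝ)^L)).ncard ≤ N₅ :=
      Set.ncard_le_ncard (Set.inter_subset_inter_right _ hsub5)
        ((endpoints_finite L).subset Set.inter_subset_left)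
    have hupE : cantorMeasure (ball z r) ≤ ENNReal.ofReal ((N₅:ℝ) * (1/2:ℝ)^L) := by
      calc cantorMeasure (ball z r)
          ≤ ((cantorEndpoints L ∩ ball z (r + (1/3:ℝ)^L)).ncard : ℝ≥0∞) *
            ENNReal.ofReal ((1/2:ℝ)^L) := main_upper z r L
      _ ≤ (N₅ : ℝ≥0∞) * ENNReal.ofReal ((1/2:ℝ)^L) :=
          mul_le_mul_left (by exact_mod_cast hcount) _
      _ = ENNReal.ofReal ((N₅:ℝ) * (1/2:ℝ)^L) := by
          rw [← ENNReal.ofReal_natCast, ← ENNReal.ofReal_mul (by positivity)]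
    have hbound : (cantorMeasure (ball z r)).toReal ≤ (N₅:ℝ) * (1/2:ℝ)^L :=
      ENNReal.toReal_le_of_le_ofReal (by positivity) hupE
    have hpow2 : (2:ℝ) ^ (-((L:ℝ) - 1)) = 2 * (1/2:ℝ)^L := by
      rw [neg_sub, Real.rpow_sub (by norm_num : (0:ℝ) < 2), Real.rpow_one, Real.rpow_natCast,
        div_pow, one_pow, div_eq_mul_one_div]
    rw [hpow2]
    have h0 : (0:ℝ) ≤ (N₅:ℝ) * (1/2:ℝ)^L := by positivity
    nlinarith [hbound, hppos]
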